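/- Let N ≥ 2 be an integer, λ_1, …, λ_N real numbers, and c a real number. Let E(λ) be the N×N matrix whose (k, i) entry is λ_i^{k−1} for 1 ≤ k ≤ N−1, and whose last row has (N, i) entry e^{c λ_i}; and for each integer k ≥ 0 let M_k(λ) be the N×N matrix with the same first N−1 rows and with last row (N, i) entry λ_i^{N−1+k}. Then det(E(λ)) = Σ_{k=0}^{∞} (c^{N−1+k} / (N−1+k)!) · det(M_k(λ)), the series being absolutely convergent. -/

import Mathlib

/-- Expanding the exponential last row of the matrix `E(λ)` as an absolutely convergent
series of Vandermonde-type determinants `M_k(λ)`. -/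
theorem stmt_4 (N : ℕ) (hN : 2 ≤ N) (lam : Fin N → ℝ) (c : ℝ) :
    HasSum
      (fun k : ℕ => c ^ (N - 1 + k) / ((N - 1 + k).factorial : ℝ) *
        Matrix.det (Matrix.of fun i j : Fin N =>
          if (i : ℕ) < N - 1 then lam j ^ (i : ℕ) else lam j ^ (N - 1 + k)))
      (Matrix.det (Matrix.of fun i j : Fin N =>
        if (i : ℕ) < N - 1 then lam j ^ (i : ℕ) else Real.exp (c * lam j))) := by
  have hN1 : N - 1 < N := by omega
  set L : Fin N := ⟨N - 1, hN1⟩ with hL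
  set A : Matrix (Fin N) (Fin N) ℝ := Matrix.of fun i j : Fin N =>
    if (i : ℕ) < N - 1 then lam j ^ (i : ℕ) else Real.exp (c * lam j) with hA
  -- key: replacing the last row
  have key : ∀ v : Fin N → ℝ,
      (Matrix.of fun i j : Fin N =>
        if (i : ℕ) < N - 1 then lam j ^ (i : ℕ) else v j) = A.updateRow L v := by
    intro v
    ext i j
    by_cases h : (i : ℕ) < N - 1
    · have hiL : i ≠ L := by
        intro hh; rw [hh] at h; simp [hL] at h
      simp [Matrix.updateRow_apply, hiL, hA, h]
    · have hiL : i = L := by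
        apply Fin.ext
        simp only [hL]
        omega
      simp [hiL, Matrix.updateRow_apply, hA, hL]
  -- the linear map in the last row
  let φ : (Fin N → ℝ) →ₗ[ℝ] ℝ :=
    { toFun := fun v => (A.updateRow L v).det
      map_add' := fun u v => Matrix.det_updateRow_add A L u v
      map_smul' := fun s v => by simpa using Matrix.det_updateRow_smul A L s v }
  have hφ : Continuous φ := φ.continuous_of_finiteDimensional
  -- HasSum of the row vectors
  have hrow : HasSum (fun m : ℕ => fun j : Fin N => (c * lam j) ^ m / (m.factorial : ℝ))
      (fun j => Real.exp (c * lam j)) := by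
    rw [Pi.hasSum]
    intro j
    rw [Real.exp_eq_exp_ℝ]
    exact NormedSpace.expSeries_div_hasSum_exp (c * lam j)
  have hg : HasSum (fun m : ℕ => φ (fun j : Fin N => (c * lam j) ^ m / (m.factorial : ℝ)))
      (φ (fun j => Real.exp (c * lam j))) := hrow.map φ.toAddMonoidHom hφ
  have hφval : φ (fun j => Real.exp (c * lam j)) = A.det := by
    show (A.updateRow L _).det = A.det
    have : (fun j => Real.exp (c * lam j)) = A L := by
      funext j; simp [hA, hL]
    rw [this, Matrix.updateRow_eq_self]
  rw [hφval] at hg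
  -- rewrite the general term
  have hterm : ∀ m : ℕ, φ (fun j : Fin N => (c * lam j) ^ m / (m.factorial : ℝ)) =
      c ^ m / (m.factorial : ℝ) *
        Matrix.det (Matrix.of fun i j : Fin N =>
          if (i : ℕ) < N - 1 then lam j ^ (i : ℕ) else lam j ^ m) := by
    intro m
    have : (fun j : Fin N => (c * lam j) ^ m / (m.factorial : ℝ)) =
        (c ^ m / (m.factorial : ℝ)) • (fun j => lam j ^ m) := by
      funext j; simp [mul_pow]; ring
    rw [this, map_smul, key (fun j => lam j ^ m)]
    simp [φ]
  set g : ℕ → ℝ := fun m => c ^ m / (m.factorial : ℝ) *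
        Matrix.det (Matrix.of fun i j : Fin N =>
          if (i : ℕ) < N - 1 then lam j ^ (i : ℕ) else lam j ^ m) with hgdef
  have hg' : HasSum g A.det := by
    have := hg
    simp only [hterm] at this
    exact this
  -- first N-1 terms vanish
  have hzero : ∀ m < N - 1, g m = 0 := by
    intro m hm
    have hdet : Matrix.det (Matrix.of fun i j : Fin N =>
          if (i : ℕ) < N - 1 then lam j ^ (i : ℕ) else lam j ^ m) = 0 := by
      apply Matrix.det_zero_of_row_eq (i := (⟨m, by omega⟩ : Fin N)) (j := L)
      · intro hh
        have := congrArg Fin.val hh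
        simp [hL] at this; omega
      · funext j
        simp [hL, hm, Nat.lt_irrefl]
    simp [hgdef, hdet]
  have hsum0 : ∑ i ∈ Finset.range (N - 1), g i = 0 :=
    Finset.sum_eq_zero fun i hi => hzero i (Finset.mem_range.mp hi)
  have hshift : HasSum (fun n => g (n + (N - 1))) A.det := by
    have := (hasSum_nat_add_iff' (N - 1) (f := g)).mpr hg'
    rwa [hsum0, sub_zero] at this
  have : (fun k : ℕ => c ^ (N - 1 + k) / ((N - 1 + k).factorial : ℝ) *
        Matrix.det (Matrix.of fun i j : Fin N =>
          if (i : ℕ) < N - 1 then lam j ^ (i : ℕ) else lam j ^ (N - 1 + k))) =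
      fun n => g (n + (N - 1)) := by
    funext k
    simp [hgdef, Nat.add_comm]
  rw [this]
  exact hshift
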